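/- Let W ≤ S_d be a permutation group acting diagonally on sequences in [0,n]^d (i.e. σ·(i_1,…,i_d) = (i_{σ^{-1}(1)},…,i_{σ^{-1}(d)})), and let χ = 1 be the trivial character. Then the generating function Σ_j x_{j_1}···x_{j_d}, summed over a transversal J of the W-orbits in [0,n]^d, equals the cycle index Z(W; p_1,…,p_d) = |W|^{-1} Σ_{σ∈W} p_1^{c_1(σ)}···p_d^{c_d(σ)}, where p_s = x_0^s + ··· + x_n^s and c_s(σ) is the number of s-cycles of σ. (Pólya's enumeration theorem.) -/

import Mathlib

open MvPolynomial

/-- The number `c_s(σ)` of cycles of length `s` in the cyclic decomposition of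
a permutation `σ` of a finite set (fixed points count as cycles of length 1). -/
def cycleCount {β : Type*} [Fintype β] [DecidableEq β]
    (σ : Equiv.Perm β) (s : ℕ) : ℕ :=
  if s = 1 then Fintype.card β - σ.support.card else Multiset.count s σ.cycleType

section PolyaHelpers

open Finset Equiv Equiv.Perm

variable {α : Type*} [Fintype α] [DecidableEq α] (σ : Equiv.Perm α)

/-- The setoid of the `SameCycle` relation. -/
def scSetoid : Setoid α :=
  ⟨σ.SameCycle, ⟨fun x => Equiv.Perm.SameCycle.refl σ x,
    Equiv.Perm.SameCycle.symm, Equiv.Perm.SameCycle.trans⟩⟩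

instance : DecidableRel (scSetoid σ).r :=
  fun a b => inferInstanceAs (Decidable (σ.SameCycle a b))

instance : DecidableEq (Quotient (scSetoid σ)) :=
  @Quotient.decidableEq _ _ (fun a b => inferInstanceAs (Decidable (σ.SameCycle a b)))

instance : Fintype (Quotient (scSetoid σ)) :=
  @Quotient.fintype _ _ _ (fun a b => inferInstanceAs (Decidable (σ.SameCycle a b)))

/-- size of a class -/
def csize (q : Quotient (scSetoid σ)) : ℕ :=
  (univ.filter fun x => Quotient.mk (scSetoid σ) x = q).card

lemma sameCycle_eq_of_not_mem_support {x y : α} (hx : x ∉ σ.support)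
    (h : σ.SameCycle x y) : y = x := by
  obtain ⟨i, hi⟩ := h
  rw [← hi, Equiv.Perm.zpow_apply_eq_self_of_apply_eq_self (Equiv.Perm.notMem_support.mp hx)]

lemma fiber_mk (x : α) :
    (univ.filter fun y => Quotient.mk (scSetoid σ) y = Quotient.mk (scSetoid σ) x)
      = if x ∈ σ.support then (σ.cycleOf x).support else {x} := by
  ext y
  simp only [mem_filter, mem_univ, true_and, Quotient.eq]
  show σ.SameCycle y x ↔ _
  split_ifs with hx
  · rw [Equiv.Perm.mem_support_cycleOf_iff]
    exact ⟨fun h => ⟨h.symm, hx⟩, fun h => h.1.symm⟩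
  · simp only [mem_singleton]
    exact ⟨fun h => sameCycle_eq_of_not_mem_support σ hx h.symm,
      fun h => h ▸ Equiv.Perm.SameCycle.refl σ x⟩

lemma csize_mk (x : α) :
    csize σ (Quotient.mk (scSetoid σ) x)
      = if x ∈ σ.support then (σ.cycleOf x).support.card else 1 := by
  rw [csize, fiber_mk]
  split_ifs <;> simp

lemma csize_pos (q : Quotient (scSetoid σ)) : 1 ≤ csize σ q := by
  rw [← q.out_eq, csize_mk]
  split_ifs with h
  · exact Finset.card_pos.mpr ⟨q.out, Equiv.Perm.mem_support_cycleOf_iff.mpr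
      ⟨Equiv.Perm.SameCycle.refl σ q.out, h⟩⟩
  · exact le_refl 1

lemma csize_le (q : Quotient (scSetoid σ)) : csize σ q ≤ Fintype.card α :=
  Finset.card_filter_le _ _ |>.trans (by simp)

lemma csize_mk_eq_one_iff (x : α) :
    csize σ (Quotient.mk (scSetoid σ) x) = 1 ↔ x ∉ σ.support := by
  rw [csize_mk]
  split_ifs with h
  · simp only [h, not_true, iff_false]
    intro hc
    have h2 : 2 ≤ (σ.cycleOf x).support.card :=
      Equiv.Perm.IsCycle.two_le_card_support (Equiv.Perm.isCycle_cycleOf σ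
        (Equiv.Perm.mem_support.mp h))
    omega
  · simp [h]

lemma count_one : (univ.filter fun q : Quotient (scSetoid σ) => csize σ q = 1).card
    = Fintype.card α - σ.support.card := by
  have : Fintype.card α - σ.support.card = σ.supportᶜ.card := by
    rw [Finset.card_compl]
  rw [this]
  apply Finset.card_bij (fun q _ => q.out)
  · intro q hq
    simp only [mem_filter, mem_univ, true_and] at hq
    rw [Finset.mem_compl]
    rw [← q.out_eq, csize_mk_eq_one_iff] at hq
    exact hq
  · intro q hq r hr h
    exact Quotient.out_injective h
  · intro x hx
    rw [Finset.mem_compl] at hx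
    refine ⟨Quotient.mk (scSetoid σ) x, ?_, ?_⟩
    · simp only [mem_filter, mem_univ, true_and]
      rw [csize_mk_eq_one_iff]
      exact hx
    · have h1 : σ.SameCycle (Quotient.mk (scSetoid σ) x).out x := @Quotient.mk_out α (scSetoid σ) x
      exact (sameCycle_eq_of_not_mem_support σ hx h1.symm)

lemma out_mem_support {q : Quotient (scSetoid σ)} (hq : csize σ q ≠ 1) :
    q.out ∈ σ.support := by
  by_contra h
  exact hq (by rw [← q.out_eq, csize_mk_eq_one_iff]; exact h)

lemma csize_eq_card_support_cycleOf (q : Quotient (scSetoid σ))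
    (h : q.out ∈ σ.support) : csize σ q = (σ.cycleOf q.out).support.card := by
  conv_lhs => rw [← q.out_eq]
  rw [csize_mk, if_pos h]

lemma count_of_ne_one {s : ℕ} (hs : s ≠ 1) :
    (univ.filter fun q : Quotient (scSetoid σ) => csize σ q = s).card
      = Multiset.count s σ.cycleType := by
  have hct : Multiset.count s σ.cycleType
      = (σ.cycleFactorsFinset.filter fun c => c.support.card = s).card := by
    rw [Equiv.Perm.cycleType_def, Multiset.count_map]
    simp only [Finset.card, Finset.filter]
    congr 1
    exact Multiset.filter_congr (fun x _ => by simp [eq_comm, Function.comp])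
  rw [hct]
  apply Finset.card_bij (fun q _ => σ.cycleOf q.out)
  · intro q hq
    simp only [mem_filter, mem_univ, true_and] at hq ⊢
    have hsup : q.out ∈ σ.support := out_mem_support σ (hq ▸ hs)
    constructor
    · exact Equiv.Perm.cycleOf_mem_cycleFactorsFinset_iff.mpr hsup
    · rw [← hq, csize_eq_card_support_cycleOf σ q hsup]
  · intro q hq r hr h
    simp only [mem_filter, mem_univ, true_and] at hq hr
    have hsq : q.out ∈ σ.support := out_mem_support σ (hq ▸ hs)
    have hsr : r.out ∈ σ.support := out_mem_support σ (hr ▸ hs)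
    have : r.out ∈ (σ.cycleOf q.out).support := by
      rw [h, Equiv.Perm.mem_support_cycleOf_iff]
      exact ⟨Equiv.Perm.SameCycle.refl σ r.out, hsr⟩
    have hsc : σ.SameCycle q.out r.out :=
      (Equiv.Perm.mem_support_cycleOf_iff.mp this).1
    rw [← q.out_eq, ← r.out_eq]
    exact Quotient.sound hsc
  · intro c hc
    simp only [mem_filter] at hc
    obtain ⟨hcf, hcard⟩ := hc
    have hcyc : c.IsCycle := (Equiv.Perm.mem_cycleFactorsFinset_iff.mp hcf).1
    obtain ⟨x, hx⟩ := hcyc.nonempty_support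
    have hceq : c = σ.cycleOf x := Equiv.Perm.cycle_is_cycleOf hx hcf
    have hxs : x ∈ σ.support := by
      rw [← Equiv.Perm.cycleOf_mem_cycleFactorsFinset_iff, ← hceq]; exact hcf
    refine ⟨Quotient.mk (scSetoid σ) x, ?_, ?_⟩
    · simp only [mem_filter, mem_univ, true_and]
      rw [csize_mk, if_pos hxs, ← hceq, hcard]
    · have h1 : σ.SameCycle (Quotient.mk (scSetoid σ) x).out x :=
        @Quotient.mk_out α (scSetoid σ) x
      rw [hceq, ← h1.cycleOf_eq]

lemma count_eq (s : ℕ) :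
    (univ.filter fun q : Quotient (scSetoid σ) => csize σ q = s).card = cycleCount σ s := by
  unfold cycleCount
  split_ifs with h
  · rw [h]; exact count_one σ
  · exact count_of_ne_one σ h

section
variable {β : Type*} [Fintype β] [DecidableEq β] {R : Type*} [CommRing R]

lemma fixed_pow {f : α → β} (hf : f ∘ σ = f) : ∀ (m : ℕ) (x : α), f ((σ ^ m) x) = f x
  | 0, x => by simp
  | m + 1, x => by
    rw [pow_succ, Equiv.Perm.mul_apply, fixed_pow hf m (σ x)]
    exact congrFun hf x

lemma fixed_invariant {f : α → β} (hf : f ∘ σ = f) {x y : α} (h : σ.SameCycle x y) :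
    f x = f y := by
  obtain ⟨i, -, hi⟩ := h.exists_pow_eq'
  rw [← hi, fixed_pow σ hf i x]

lemma fixed_sum (w : β → R) :
    ∑ f ∈ univ.filter (fun f : α → β => f ∘ σ = f), ∏ a, w (f a)
      = ∏ s ∈ Icc 1 (Fintype.card α), (∑ i, w i ^ s) ^ cycleCount σ s := by
  have step1 : ∑ f ∈ univ.filter (fun f : α → β => f ∘ σ = f), ∏ a, w (f a)
      = ∑ g : Quotient (scSetoid σ) → β, ∏ q, w (g q) ^ csize σ q := by
    refine Finset.sum_bij' (fun f _ => fun q => f q.out)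
      (fun g _ => g ∘ (Quotient.mk (scSetoid σ))) ?_ ?_ ?_ ?_ ?_
    · intro f hf
      exact mem_univ _
    · intro g hg
      simp only [mem_filter, mem_univ, true_and]
      funext a
      show g (Quotient.mk (scSetoid σ) (σ a)) = g (Quotient.mk (scSetoid σ) a)
      congr 1
      exact Quotient.sound ⟨-1, by simp⟩
    · intro f hf
      simp only [mem_filter, mem_univ, true_and] at hf
      funext a
      show f ((Quotient.mk (scSetoid σ) a).out) = f a
      exact fixed_invariant σ hf (@Quotient.mk_out α (scSetoid σ) a).symm |>.symm
    · intro g hg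
      funext q
      show g (Quotient.mk (scSetoid σ) q.out) = g q
      rw [q.out_eq]
    · intro f hf
      simp only [mem_filter, mem_univ, true_and] at hf
      have key : ∀ a : α, f a = f ((Quotient.mk (scSetoid σ) a).out) := fun a =>
        fixed_invariant σ hf (@Quotient.mk_out α (scSetoid σ) a).symm
      calc ∏ a, w (f a) = ∏ a, w (f ((Quotient.mk (scSetoid σ) a).out)) := by
            exact Finset.prod_congr rfl fun a _ => by rw [← key a]
        _ = ∏ q : Quotient (scSetoid σ), ∏ a ∈ univ.filter
              (fun a => Quotient.mk (scSetoid σ) a = q), w (f q.out) :=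
            (Finset.prod_fiberwise' univ (Quotient.mk (scSetoid σ))
              (fun q => w (f q.out))).symm
        _ = ∏ q : Quotient (scSetoid σ), w (f q.out) ^ csize σ q := by
            exact Finset.prod_congr rfl fun q _ => Finset.prod_const _
  rw [step1]
  have step2 : ∑ g : Quotient (scSetoid σ) → β, ∏ q, w (g q) ^ csize σ q
      = ∏ q : Quotient (scSetoid σ), ∑ i, w i ^ csize σ q :=
    (Fintype.prod_sum fun q i => w i ^ csize σ q).symm
  rw [step2]
  rw [← Finset.prod_fiberwise_of_maps_to' (g := csize σ)
    (fun q _ => Finset.mem_Icc.mpr ⟨csize_pos σ q, csize_le σ q⟩)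
    (fun s => ∑ i, w i ^ s)]
  exact Finset.prod_congr rfl fun s _ => by rw [Finset.prod_const, count_eq σ s]

end


end PolyaHelpers

/-- **Pólya's enumeration theorem.** Let `W ≤ S_d` act on the
hypercube `[0,n]^d` (functions `Fin d → Fin (n+1)`) by permuting positions,
and let `J` be a transversal of the `W`-orbits.  Then the orbit-counting
generating function `∑_{j∈J} x_{j_1}⋯x_{j_d}` equals the cycle index
`Z(W; p_1,…,p_d) = |W|⁻¹ ∑_{σ∈W} p_1^{c_1(σ)}⋯p_d^{c_d(σ)}` evaluated at the
power sums `p_s = x_0^s + ⋯ + x_n^s`. -/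
theorem polya_enumeration
    (d n : ℕ) (W : Subgroup (Equiv.Perm (Fin d))) [Fintype W]
    (J : Finset (Fin d → Fin (n + 1)))
    (hJ : ∀ f : Fin d → Fin (n + 1),
      ∃! j, j ∈ J ∧ ∃ σ ∈ W, f = j ∘ σ) :
    ∑ j ∈ J, ∏ s : Fin d, (X (j s) : MvPolynomial (Fin (n + 1)) ℚ) =
      (Nat.card W : ℚ)⁻¹ •
        ∑ σ : W, ∏ s ∈ Finset.Icc 1 d,
          (∑ i : Fin (n + 1), (X i : MvPolynomial (Fin (n + 1)) ℚ) ^ s) ^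
            cycleCount (σ : Equiv.Perm (Fin d)) s := by

  classical
  set M := MvPolynomial (Fin (n + 1)) ℚ
  set w : (Fin d → Fin (n + 1)) → M := fun f => ∏ s, X (f s) with hw
  have hcard : (Nat.card W : ℚ) ≠ 0 := by
    simp [Nat.card_eq_fintype_card, Fintype.card_ne_zero]
  rw [eq_comm, inv_smul_eq_iff₀ hcard]
  -- rewrite each term via fixed_sum
  have hfs : ∀ σ : W, (∏ s ∈ Finset.Icc 1 d,
      (∑ i : Fin (n + 1), (X i : M) ^ s) ^ cycleCount (σ : Equiv.Perm (Fin d)) s)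
      = ∑ f ∈ Finset.univ.filter (fun f : Fin d → Fin (n + 1) => f ∘ (σ : Equiv.Perm (Fin d)) = f),
          ∏ a, X (f a) := by
    intro σ
    rw [fixed_sum (σ : Equiv.Perm (Fin d)) (fun i => (X i : M))]
    simp
  simp only [hfs]
  -- RHS (fixed-point side) as a sum over f of stabilizer cardinality
  have rhs_eq : ∑ σ : W, ∑ f ∈ Finset.univ.filter
        (fun f : Fin d → Fin (n + 1) => f ∘ (σ : Equiv.Perm (Fin d)) = f), w f
      = ∑ f : Fin d → Fin (n + 1),
          ((Finset.univ.filter fun σ : W => f ∘ (σ : Equiv.Perm (Fin d)) = f).card) • w f := by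
    simp only [Finset.sum_filter]
    rw [Finset.sum_comm]
    refine Finset.sum_congr rfl fun f _ => ?_
    rw [← Finset.sum_filter, Finset.sum_const]
  -- LHS (orbit side)
  have lhs_eq : (Nat.card W : ℚ) • ∑ j ∈ J, w j
      = ∑ f : Fin d → Fin (n + 1),
          (((J ×ˢ (Finset.univ : Finset W)).filter
            (fun p => p.1 ∘ (p.2 : Equiv.Perm (Fin d)) = f)).card) • w f := by
    have h1 : (Nat.card W : ℚ) • ∑ j ∈ J, w j
        = ∑ p ∈ J ×ˢ (Finset.univ : Finset W), w (p.1 ∘ (p.2 : Equiv.Perm (Fin d))) := by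
      rw [Finset.sum_product]
      rw [Nat.cast_smul_eq_nsmul, Finset.smul_sum]
      refine Finset.sum_congr rfl fun j _ => ?_
      rw [Nat.card_eq_fintype_card, ← Finset.card_univ, ← Finset.sum_const]
      refine Finset.sum_congr rfl fun σ _ => ?_
      show w j = ∏ s, X (j ((σ : Equiv.Perm (Fin d)) s))
      rw [hw]
      exact (Equiv.prod_comp (σ : Equiv.Perm (Fin d)) (fun s => (X (j s) : M))).symm
    rw [h1, ← Finset.sum_fiberwise_of_maps_to
      (g := fun p : (Fin d → Fin (n + 1)) × W => p.1 ∘ (p.2 : Equiv.Perm (Fin d)))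
      (fun p _ => Finset.mem_univ _) (fun p => w (p.1 ∘ (p.2 : Equiv.Perm (Fin d))))]
    refine Finset.sum_congr rfl fun f _ => ?_
    rw [← Finset.sum_const]
    exact Finset.sum_congr rfl fun p hp => by rw [(Finset.mem_filter.mp hp).2]
  rw [rhs_eq, lhs_eq]
  refine Finset.sum_congr rfl fun f _ => ?_
  congr 1
  obtain ⟨j₀, ⟨hj₀J, σ₀, hσ₀W, hfj⟩, huniq⟩ := hJ f
  set s₀ : W := ⟨σ₀, hσ₀W⟩ with hs₀
  refine Finset.card_nbij' (fun τ => (j₀, s₀ * τ)) (fun p => s₀⁻¹ * p.2) ?hi ?hj ?hli ?hri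
  case hj =>
    intro p hp
    simp only [Finset.mem_coe, Finset.mem_filter, Finset.mem_product, Finset.mem_univ, and_true] at hp
    obtain ⟨hpJ, hpf⟩ := hp
    have hp1 : p.1 = j₀ := huniq p.1 ⟨hpJ, (p.2 : Equiv.Perm (Fin d)), p.2.2, hpf.symm⟩
    simp only [Finset.mem_coe, Finset.mem_filter, Finset.mem_univ, true_and]
    funext x
    show f ((↑(s₀⁻¹ * p.2) : Equiv.Perm (Fin d)) x) = f x
    have : (↑(s₀⁻¹ * p.2) : Equiv.Perm (Fin d)) x = σ₀⁻¹ ((p.2 : Equiv.Perm (Fin d)) x) := by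
      simp [hs₀, Equiv.Perm.mul_apply]
    rw [this]
    have e1 : f (σ₀⁻¹ ((p.2 : Equiv.Perm (Fin d)) x)) = j₀ ((p.2 : Equiv.Perm (Fin d)) x) := by
      conv_lhs => rw [hfj]
      show j₀ (σ₀ (σ₀⁻¹ ((p.2 : Equiv.Perm (Fin d)) x))) = _
      rw [← Equiv.Perm.mul_apply, mul_inv_cancel, Equiv.Perm.one_apply]
    rw [e1, ← hp1]
    exact congrFun hpf x
  case hi =>
    intro τ hτ
    simp only [Finset.mem_coe, Finset.mem_filter, Finset.mem_univ, true_and] at hτ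
    simp only [Finset.mem_coe, Finset.mem_filter, Finset.mem_product, Finset.mem_univ, and_true]
    refine ⟨hj₀J, ?_⟩
    funext x
    show j₀ ((↑(s₀ * τ) : Equiv.Perm (Fin d)) x) = f x
    have : (↑(s₀ * τ) : Equiv.Perm (Fin d)) x = σ₀ ((τ : Equiv.Perm (Fin d)) x) := by
      simp [hs₀, Equiv.Perm.mul_apply]
    rw [this]
    calc j₀ (σ₀ ((τ : Equiv.Perm (Fin d)) x))
        = f ((τ : Equiv.Perm (Fin d)) x) := (congrFun hfj _).symm
      _ = f x := congrFun hτ x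
  case hri =>
    intro p hp
    simp only [Finset.mem_coe, Finset.mem_filter, Finset.mem_product, Finset.mem_univ, and_true] at hp
    have hp1 : p.1 = j₀ := huniq p.1 ⟨hp.1, (p.2 : Equiv.Perm (Fin d)), p.2.2, hp.2.symm⟩
    ext
    · simp [hp1]
    · simp
  case hli =>
    intro τ hτ
    simp
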